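/- Let G be a finite simple graph with edge-connectivity λ, and let X₁, X₂, X₃ be nonempty sets partitioning V(G) such that d(X₁) = d(X₂) = d(X₃) = λ. Then d(X₁,X₂) = d(X₂,X₃) = d(X₁,X₃) = λ/2; in particular, λ is even. -/

import Mathlib

open scoped Classical

/-- `d(X)`: the number of edges of `G` with exactly one endpoint in `X`.
Each crossing edge `uv` (with `u ∈ X`, `v ∉ X`) is counted once, as the
ordered pair `(u, v)`. -/
noncomputable def cutSize {V : Type*} [Fintype V] (G : SimpleGraph V)
    (X : Finset V) : ℕ :=
  (Finset.univ.filter fun p : V × V => p.1 ∈ X ∧ p.2 ∉ X ∧ G.Adj p.1 p.2).card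

/-- `lam` is the edge-connectivity of `G`: the minimum of `d(X)` over all
`∅ ≠ X ⊊ V`. -/
def IsEdgeConn {V : Type*} [Fintype V] (G : SimpleGraph V) (lam : ℕ) : Prop :=
  (∀ X : Finset V, X.Nonempty → X ≠ Finset.univ → lam ≤ cutSize G X) ∧
  ∃ X : Finset V, X.Nonempty ∧ X ≠ Finset.univ ∧ cutSize G X = lam

/-- `X` is a min-cut of `G` (whose edge-connectivity is `lam`). -/
def IsMinCut {V : Type*} [Fintype V] (G : SimpleGraph V) (lam : ℕ)
    (X : Finset V) : Prop :=
  X.Nonempty ∧ X ≠ Finset.univ ∧ cutSize G X = lam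

/-- `X` is a non-trivial min-cut: a min-cut with `2 ≤ |X| ≤ |V| - 2`. -/
def IsNontrivialMinCut {V : Type*} [Fintype V] (G : SimpleGraph V) (lam : ℕ)
    (X : Finset V) : Prop :=
  IsMinCut G lam X ∧ 2 ≤ X.card ∧ X.card ≤ Fintype.card V - 2

/-- `d(X,Y)`: for disjoint `X`, `Y`, the number of edges of `G` with one
endpoint in `X` and one endpoint in `Y`. -/
noncomputable def crossCount {V : Type*} [Fintype V] (G : SimpleGraph V)
    (X Y : Finset V) : ℕ :=
  (Finset.univ.filter fun p : V × V => p.1 ∈ X ∧ p.2 ∈ Y ∧ G.Adj p.1 p.2).card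


lemma crossCount_comm {V : Type*} [Fintype V] (G : SimpleGraph V) (X Y : Finset V) :
    crossCount G X Y = crossCount G Y X := by
  unfold crossCount
  apply Finset.card_nbij' (i := Prod.swap) (j := Prod.swap) <;>
    simp +contextual [Finset.mem_coe, G.adj_comm, and_left_comm, Set.MapsTo, Set.LeftInvOn, Set.RightInvOn]

lemma cutSize_split {V : Type*} [Fintype V] (G : SimpleGraph V) (X Y Z : Finset V)
    (h : ∀ v, v ∉ X ↔ v ∈ Y ∨ v ∈ Z) (hYZ : Disjoint Y Z) :
    cutSize G X = crossCount G X Y + crossCount G X Z := by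
  unfold cutSize crossCount
  rw [← Finset.card_union_of_disjoint, ← Finset.filter_or]
  · congr 1; ext p; simp only [Finset.mem_filter]
    constructor
    · rintro ⟨hu, h1, h2, h3⟩
      rcases (h p.2).mp h2 with hy | hz
      · exact ⟨hu, Or.inl ⟨h1, hy, h3⟩⟩
      · exact ⟨hu, Or.inr ⟨h1, hz, h3⟩⟩
    · rintro ⟨hu, (⟨h1, hy, h3⟩ | ⟨h1, hz, h3⟩)⟩
      · exact ⟨hu, h1, (h p.2).mpr (Or.inl hy), h3⟩
      · exact ⟨hu, h1, (h p.2).mpr (Or.inr hz), h3⟩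
  · rw [Finset.disjoint_left]
    rintro p hp hq
    simp only [Finset.mem_filter] at hp hq
    exact Finset.disjoint_left.mp hYZ hp.2.2.1 hq.2.2.1

/-- If `X₁, X₂, X₃` are nonempty sets partitioning the vertex
set of a finite simple graph `G` with edge-connectivity `λ`, and
`d(X₁) = d(X₂) = d(X₃) = λ`, then `d(X₁,X₂) = d(X₂,X₃) = d(X₁,X₃) = λ/2`;
in particular `λ` is even. (The equalities are stated as `2·d(Xᵢ,Xⱼ) = λ`.) -/
theorem statement4 (V : Type) [Fintype V] (G : SimpleGraph V) (lam : ℕ)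
    (hconn : IsEdgeConn G lam)
    (X₁ X₂ X₃ : Finset V)
    (h1 : X₁.Nonempty) (h2 : X₂.Nonempty) (h3 : X₃.Nonempty)
    (h12 : Disjoint X₁ X₂) (h13 : Disjoint X₁ X₃) (h23 : Disjoint X₂ X₃)
    (hcover : X₁ ∪ X₂ ∪ X₃ = Finset.univ)
    (hc1 : cutSize G X₁ = lam) (hc2 : cutSize G X₂ = lam)
    (hc3 : cutSize G X₃ = lam) :
    2 * crossCount G X₁ X₂ = lam ∧ 2 * crossCount G X₂ X₃ = lam ∧
      2 * crossCount G X₁ X₃ = lam ∧ Even lam := by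
  have hmem : ∀ v : V, v ∈ X₁ ∨ v ∈ X₂ ∨ v ∈ X₃ := by
    intro v
    have := Finset.mem_univ v
    rw [← hcover] at this
    simpa [Finset.mem_union, or_assoc] using this
  have k12 := Finset.disjoint_left.mp h12
  have k13 := Finset.disjoint_left.mp h13
  have k23 := Finset.disjoint_left.mp h23
  have s1 : cutSize G X₁ = crossCount G X₁ X₂ + crossCount G X₁ X₃ := by
    apply cutSize_split _ _ _ _ _ h23
    intro v
    constructor
    · intro hv; rcases hmem v with h | h | h <;> tauto
    · rintro (h | h) hv
      · exact k12 hv h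
      · exact k13 hv h
  have s2 : cutSize G X₂ = crossCount G X₂ X₁ + crossCount G X₂ X₃ := by
    apply cutSize_split _ _ _ _ _ h13
    intro v
    constructor
    · intro hv; rcases hmem v with h | h | h <;> tauto
    · rintro (h | h) hv
      · exact k12 h hv
      · exact k23 hv h
  have s3 : cutSize G X₃ = crossCount G X₃ X₁ + crossCount G X₃ X₂ := by
    apply cutSize_split _ _ _ _ _ h12
    intro v
    constructor
    · intro hv; rcases hmem v with h | h | h <;> tauto
    · rintro (h | h) hv
      · exact k13 h hv
      · exact k23 h hv
  rw [crossCount_comm G X₂ X₁] at s2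
  rw [crossCount_comm G X₃ X₁, crossCount_comm G X₃ X₂] at s3
  rw [hc1] at s1; rw [hc2] at s2; rw [hc3] at s3
  refine ⟨by omega, by omega, by omega, ⟨crossCount G X₂ X₃, by omega⟩⟩
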